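/- Let X and Y be independent real random variables with lb_X ≤ X ≤ ub_X, lb_Y ≤ Y ≤ ub_Y almost surely, lb_Y ≥ ub_X, E[Y] > E[X], and let c ≥ 0 satisfy c/(E[Y] − E[X]) ≤ 1. Then P(|X − Y| < c) ≤ 1 − (1 − c/(E[Y]−E[X]))² · (E[Y]−E[X])/(ub_Y − lb_X). -/

import Mathlib

open MeasureTheory ProbabilityTheory

theorem paley_zygmund_prob_upper_bound {Ω : Type*} [MeasurableSpace Ω]
    (μ : Measure Ω) [IsProbabilityMeasure μ] (X Y : Ω → ℝ)
    (lbX ubX lbY ubY c : ℝ)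
    (hindep : IndepFun X Y μ)
    (hXint : Integrable X μ) (hYint : Integrable Y μ)
    (hXbd : ∀ᵐ ω ∂μ, lbX ≤ X ω ∧ X ω ≤ ubX)
    (hYbd : ∀ᵐ ω ∂μ, lbY ≤ Y ω ∧ Y ω ≤ ubY)
    (hord : ubX ≤ lbY)
    (hmean : ∫ ω, X ω ∂μ < ∫ ω, Y ω ∂μ)
    (hc0 : 0 ≤ c)
    (hc1 : c / ((∫ ω, Y ω ∂μ) - ∫ ω, X ω ∂μ) ≤ 1) :
    (μ {ω | |X ω - Y ω| < c}).toReal ≤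
      1 - (1 - c / ((∫ ω, Y ω ∂μ) - ∫ ω, X ω ∂μ)) ^ 2 *
        (((∫ ω, Y ω ∂μ) - ∫ ω, X ω ∂μ) / (ubY - lbX)) := by
  set m : ℝ := (∫ ω, Y ω ∂μ) - ∫ ω, X ω ∂μ with hm_def
  have hm : 0 < m := sub_pos.2 hmean
  have hcm : c ≤ m := (div_le_one hm).1 hc1
  -- bounds on the means
  have hXlb : lbX ≤ ∫ ω, X ω ∂μ := by
    have h := integral_mono_ae (integrable_const lbX) hXint
      (by filter_upwards [hXbd] with ω h using h.1)
    simpa using h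
  have hYub : (∫ ω, Y ω ∂μ) ≤ ubY := by
    have h := integral_mono_ae hYint (integrable_const ubY)
      (by filter_upwards [hYbd] with ω h using h.2)
    simpa using h
  set M : ℝ := ubY - lbX with hM_def
  have hmM : m ≤ M := by simp only [hm_def, hM_def]; linarith
  have hM0 : 0 < M := lt_of_lt_of_le hm hmM
  -- measurable representatives
  obtain ⟨X', hX'sm, hXX'⟩ := hXint.1
  obtain ⟨Y', hY'sm, hYY'⟩ := hYint.1
  have hX'm : Measurable X' := hX'sm.measurable
  have hY'm : Measurable Y' := hY'sm.measurable
  set A : Set Ω := {ω | |X' ω - Y' ω| < c} with hA_def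
  have hAmeas : MeasurableSet A := by
    exact measurableSet_lt ((hX'm.sub hY'm).abs) measurable_const
  have hμA : μ {ω | |X ω - Y ω| < c} = μ A := by
    apply measure_congr
    apply Filter.eventuallyEq_set.2
    filter_upwards [hXX', hYY'] with ω h1 h2
    simp [hA_def, Set.mem_setOf_eq, h1, h2]
  set P : ℝ := (μ A).toReal with hP_def
  have hP0 : 0 ≤ P := ENNReal.toReal_nonneg
  have hP1 : P ≤ 1 := by
    rw [hP_def]
    simpa using ENNReal.toReal_mono ENNReal.one_ne_top prob_le_one
  have hPc : (μ Aᶜ).toReal = 1 - P := by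
    rw [prob_compl_eq_one_sub hAmeas, hP_def,
      ENNReal.toReal_sub_of_le (prob_le_one) ENNReal.one_ne_top, ENNReal.toReal_one]
  -- key expectation bound
  have hZint : Integrable (fun ω => Y' ω - X' ω) μ :=
    ((hYint.congr hYY').sub (hXint.congr hXX'))
  have hZeq : (∫ ω, (Y' ω - X' ω) ∂μ) = m := by
    rw [integral_sub (hYint.congr hYY') (hXint.congr hXX'), hm_def,
      integral_congr_ae hYY'.symm, integral_congr_ae hXX'.symm]
  have hg_int : Integrable (fun ω => A.indicator (fun _ => c) ω
      + Aᶜ.indicator (fun _ => M) ω) μ := by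
    exact ((integrable_const c).indicator hAmeas).add
      ((integrable_const M).indicator hAmeas.compl)
  have hZle : ∀ᵐ ω ∂μ, (Y' ω - X' ω) ≤ A.indicator (fun _ => c) ω
      + Aᶜ.indicator (fun _ => M) ω := by
    filter_upwards [hXbd, hYbd, hXX', hYY'] with ω hx hy h1 h2
    by_cases hω : ω ∈ A
    · have : |X' ω - Y' ω| < c := hω
      rw [Set.indicator_of_mem hω, Set.indicator_of_notMem (by simp [hω])]
      have : Y' ω - X' ω ≤ |X' ω - Y' ω| := by
        rw [abs_sub_comm]; exact le_abs_self _
      linarith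
    · rw [Set.indicator_of_notMem hω, Set.indicator_of_mem (by simp [hω])]
      have := hx.1; have := hy.2
      simp only [hM_def]
      rw [← h1, ← h2]
      linarith
  have hkey : m ≤ c * P + M * (1 - P) := by
    have h := integral_mono_ae hZint hg_int hZle
    rw [hZeq] at h
    rw [integral_add ((integrable_const c).indicator hAmeas)
      ((integrable_const M).indicator hAmeas.compl),
      integral_indicator_const _ hAmeas, integral_indicator_const _ hAmeas.compl] at h
    rw [smul_eq_mul, smul_eq_mul, measureReal_def, measureReal_def, hPc, ← hP_def] at h
    linarith [h]
  -- finish with algebra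
  rw [hμA]
  have h1 : (1 - c / m) ^ 2 * (m / M) ≤ (m - c) / M := by
    have : 1 - c / m = (m - c) / m := by field_simp
    rw [this, div_pow, div_mul_div_comm]
    rw [div_le_div_iff₀ (by positivity) hM0]
    have h2 : (m - c) ^ 2 ≤ (m - c) * m := by nlinarith
    nlinarith [mul_le_mul_of_nonneg_right h2 (mul_nonneg hm.le hM0.le)]
  have h2 : P ≤ 1 - (m - c) / M := by
    have h3 : (m - c) / M ≤ 1 - P := by
      rw [div_le_iff₀ hM0]
      nlinarith [mul_nonneg (sub_nonneg.2 hP1) hc0]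
    linarith
  linarith
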